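/- arXiv:1203.3836 — 2 statements merged into one kernel-verified Lean document; each statement's English description precedes it below -/
import Mathlib

section
/- Every generalized 1-skeleton (Γ, α, θ, λ) in ℝ^n whose generalized axial function is 2-independent — i.e. α(e) and α(e') are linearly independent for all distinct e, e' ∈ E^p and every vertex p — is equivalent to a 1-skeleton: there exist α' and λ' such that (Γ, α', θ, λ') is a 1-skeleton (α'(ē) = −α'(e) for all oriented edges e) equivalent to (Γ, α, θ, λ). -/
open SimpleGraph

universe u u' v

variable {V : Type u}

/-- The type of connections on a graph: for each oriented edge (given by an adjacency proof),
a bijection between the neighbor set of the initial vertex and that of the terminal vertex. -/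
abbrev GraphConn {V : Type u} (G : SimpleGraph V) : Type u :=
  ∀ ⦃p q : V⦄, G.Adj p q → (↥(G.neighborSet p) ≃ ↥(G.neighborSet q))

/-- The type of compatibility systems: for each oriented edge, a real-valued function on the
oriented edges at the initial vertex. -/
abbrev CompatSys {V : Type u} (G : SimpleGraph V) : Type u :=
  ∀ ⦃p q : V⦄, G.Adj p q → (↥(G.neighborSet p) → ℝ)

/-- The type of (generalized) axial functions with values in `W`. -/
abbrev AxialFn {V : Type u} (G : SimpleGraph V) (W : Type v) : Type (max u v) :=
  ∀ ⦃p q : V⦄, G.Adj p q → W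

/-- The `G`-adjacency underlying an element of a neighbor set. -/
def nadj {G : SimpleGraph V} {p : V} (e : ↥(G.neighborSet p)) : G.Adj p ↑e := e.2

/-- `θ` is a connection: `θ_e e = ē` and `θ_{ē} = θ_e⁻¹`. -/
def IsConnection (G : SimpleGraph V) (θ : GraphConn G) : Prop :=
  (∀ ⦃p q : V⦄ (h : G.Adj p q), θ h ⟨q, h⟩ = ⟨p, h.symm⟩) ∧
  (∀ ⦃p q : V⦄ (h : G.Adj p q), θ h.symm = (θ h).symm)

/-- `lam` is a compatibility system for `(G, θ)`: positive values with
`λ_{ē}(θ_e e') = 1 / λ_e(e')`. -/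
def IsCompatSystem (G : SimpleGraph V) (θ : GraphConn G) (lam : CompatSys G) : Prop :=
  (∀ ⦃p q : V⦄ (h : G.Adj p q) (e : ↥(G.neighborSet p)), 0 < lam h e) ∧
  (∀ ⦃p q : V⦄ (h : G.Adj p q) (e : ↥(G.neighborSet p)),
      lam h.symm (θ h e) = (lam h e)⁻¹)

section Axial

variable {W : Type v} [AddCommGroup W] [Module ℝ W]

/-- `α` is a generalized axial function for `(G, θ, λ)`: (gA1) `α(e) = -m_e • α(ē)` for some
`m_e > 0`, and (gA2) `α(e') - λ_e(e') • α(θ_e(e'))` is a scalar multiple of `α(e)` for `e' ≠ e`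
at the initial vertex of `e`. -/
def IsGenAxial (G : SimpleGraph V) (θ : GraphConn G) (lam : CompatSys G)
    (α : AxialFn G W) : Prop :=
  (∀ ⦃p q : V⦄ (h : G.Adj p q), ∃ m : ℝ, 0 < m ∧ α h = -(m • α h.symm)) ∧
  (∀ ⦃p q : V⦄ (h : G.Adj p q) (e : ↥(G.neighborSet p)), (↑e : V) ≠ q →
      ∃ c : ℝ, α (nadj e) - lam h e • α (nadj (θ h e)) = c • α h)

/-- The quadruple `(G, θ, λ, α)` is a generalized 1-skeleton (on a connected graph). -/
structure IsGenSkeleton (G : SimpleGraph V) (θ : GraphConn G) (lam : CompatSys G)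
    (α : AxialFn G W) : Prop where
  connected : G.Connected
  conn : IsConnection G θ
  compat : IsCompatSystem G θ lam
  axial : IsGenAxial G θ lam α

/-- The extra axioms making a generalized 1-skeleton an honest 1-skeleton:
`α(ē) = -α(e)` and pairwise linear independence at each vertex. -/
def IsSkeletal (G : SimpleGraph V) (α : AxialFn G W) : Prop :=
  (∀ ⦃p q : V⦄ (h : G.Adj p q), α h.symm = -α h) ∧
  (∀ (p : V) (e e' : ↥(G.neighborSet p)), e ≠ e' →
      LinearIndependent ℝ ![α (nadj e), α (nadj e')])

/-- `(G, θ, λ, α)` is a 1-skeleton. -/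
def IsOneSkeleton (G : SimpleGraph V) (θ : GraphConn G) (lam : CompatSys G)
    (α : AxialFn G W) : Prop :=
  IsGenSkeleton G θ lam α ∧ IsSkeletal G α

/-- `G` is `d`-valent. -/
def Valency (G : SimpleGraph V) (d : ℕ) : Prop :=
  ∀ p : V, (G.neighborSet p).ncard = d

/-- `α` is `k`-independent. -/
def kIndep (G : SimpleGraph V) (α : AxialFn G W) (k : ℕ) : Prop :=
  ∀ (p : V) (s : Finset ↥(G.neighborSet p)), s.card = k →
    LinearIndependent ℝ (fun e : ↥(↑s : Set ↥(G.neighborSet p)) => α (nadj (e : ↥(G.neighborSet p))))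

/-- `α` is effective: the axial vectors at each vertex span the target space. -/
def EffectiveAxial (G : SimpleGraph V) (α : AxialFn G W) : Prop :=
  ∀ p : V, Submodule.span ℝ (Set.range fun e : ↥(G.neighborSet p) => α (nadj e)) = ⊤

/-- A covector is generic if it pairs nonzero with each axial vector. -/
def GenericCovec (G : SimpleGraph V) (α : AxialFn G W) (ξ : W →ₗ[ℝ] ℝ) : Prop :=
  ∀ ⦃p q : V⦄ (h : G.Adj p q), ξ (α h) ≠ 0

/-- The directed-edge relation induced by a covector. -/
def dirRel (G : SimpleGraph V) (α : AxialFn G W) (ξ : W →ₗ[ℝ] ℝ) : V → V → Prop :=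
  fun p q => ∃ h : G.Adj p q, 0 < ξ (α h)

/-- A generic covector is polarizing if the induced orientation has no directed cycles. -/
def PolarizingCovec (G : SimpleGraph V) (α : AxialFn G W) (ξ : W →ₗ[ℝ] ℝ) : Prop :=
  GenericCovec G α ξ ∧ ∀ p : V, ¬ Relation.TransGen (dirRel G α ξ) p p

/-- A Morse function compatible with a (polarizing) covector. -/
def MorseCompat (G : SimpleGraph V) (α : AxialFn G W) (ξ : W →ₗ[ℝ] ℝ) (φ : V → ℝ) : Prop :=
  Function.Injective φ ∧ ∀ ⦃p q : V⦄ (h : G.Adj p q), 0 < ξ (α h) → φ p < φ q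

/-- An embedding of a 1-skeleton. -/
def IsSkelEmbedding (G : SimpleGraph V) (α : AxialFn G W) (f : V → W) : Prop :=
  ∀ ⦃p q : V⦄ (h : G.Adj p q), ∃ c : ℝ, 0 < c ∧ f q - f p = c • α h

end Axial
section Sub

variable {W : Type v} [AddCommGroup W] [Module ℝ W]

/-- Transport of oriented edges along a walk, via the connection. -/
def transport {G : SimpleGraph V} (θ : GraphConn G) :
    ∀ {p q : V}, G.Walk p q → ↥(G.neighborSet p) → ↥(G.neighborSet q)
  | _, _, SimpleGraph.Walk.nil, e => e
  | _, _, SimpleGraph.Walk.cons h w, e => transport θ w (θ h e)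

/-- The local path-connection number of an oriented edge along a walk. -/
def transNum {G : SimpleGraph V} (θ : GraphConn G) (lam : CompatSys G) :
    ∀ {p q : V}, G.Walk p q → ↥(G.neighborSet p) → ℝ
  | _, _, SimpleGraph.Walk.nil, _ => 1
  | _, _, SimpleGraph.Walk.cons h w, e => lam h e * transNum θ lam w (θ h e)

/-- A walk of `G` lies in the subgraph `H` if all its darts are edges of `H`. -/
def WalkIn {G : SimpleGraph V} (H : G.Subgraph) {p q : V} (w : G.Walk p q) : Prop :=
  ∀ d ∈ w.darts, H.Adj d.toProd.1 d.toProd.2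

/-- A subskeleton: a connected regular totally geodesic subgraph. -/
structure IsSubskeleton {G : SimpleGraph V} (θ : GraphConn G) (H : G.Subgraph) : Prop where
  connected : H.Connected
  regular : ∃ k : ℕ, ∀ p ∈ H.verts, (H.neighborSet p).ncard = k
  geodesic : ∀ ⦃p q : V⦄ (h : H.Adj p q) (e : ↥(G.neighborSet p)),
      H.Adj p ↑e → H.Adj q ↑(θ (H.adj_sub h) e)

/-- The subskeleton `H` has trivial normal holonomy. -/
def TrivialNormalHolonomy {G : SimpleGraph V} (θ : GraphConn G) (H : G.Subgraph) : Prop :=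
  ∀ (p : V) (w : G.Walk p p), WalkIn H w →
    ∀ e : ↥(G.neighborSet p), ¬ H.Adj p ↑e → transport θ w e = e

/-- The subskeleton `H` is level. -/
def LevelSub {G : SimpleGraph V} (θ : GraphConn G) (lam : CompatSys G)
    (H : G.Subgraph) : Prop :=
  ∀ (p : V) (w : G.Walk p p), WalkIn H w →
    ∀ e : ↥(G.neighborSet p), ¬ H.Adj p ↑e → transport θ w e = e →
      transNum θ lam w e = 1

/-- The index of a vertex of a subgraph with respect to a covector. -/
noncomputable def subIndex {G : SimpleGraph V} (α : AxialFn G W) (ξ : W →ₗ[ℝ] ℝ)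
    (H : G.Subgraph) (p : V) : ℕ :=
  {q : V | ∃ h : H.Adj p q, ξ (α (H.adj_sub h)) < 0}.ncard

/-- `b₀` of a subgraph with respect to a covector: the number of index-zero vertices. -/
noncomputable def subB0 {G : SimpleGraph V} (α : AxialFn G W) (ξ : W →ₗ[ℝ] ℝ)
    (H : G.Subgraph) : ℕ :=
  {p : V | p ∈ H.verts ∧ subIndex α ξ H p = 0}.ncard

/-- A 2-face: a 2-valent subskeleton with `b₀ = 1` (computed with the covector `ξ`). -/
def IsTwoFace {G : SimpleGraph V} (θ : GraphConn G) (α : AxialFn G W) (ξ : W →ₗ[ℝ] ℝ)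
    (H : G.Subgraph) : Prop :=
  IsSubskeleton θ H ∧ (∀ p ∈ H.verts, (H.neighborSet p).ncard = 2) ∧ subB0 α ξ H = 1

/-- Enough 2-faces: any two distinct oriented edges at a vertex lie on a unique 2-face. -/
def EnoughTwoFaces (G : SimpleGraph V) (θ : GraphConn G) (α : AxialFn G W)
    (ξ : W →ₗ[ℝ] ℝ) : Prop :=
  ∀ (p : V) (e e' : ↥(G.neighborSet p)), e ≠ e' →
    ∃! H : G.Subgraph, IsTwoFace θ α ξ H ∧ H.Adj p ↑e ∧ H.Adj p ↑e'

/-- A 1-skeleton is reducible if it admits a polarizing covector and has enough 2-faces. -/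
def ReducibleSkel (G : SimpleGraph V) (θ : GraphConn G) (α : AxialFn G W) : Prop :=
  ∃ ξ : W →ₗ[ℝ] ℝ, PolarizingCovec G α ξ ∧ EnoughTwoFaces G θ α ξ

/-- A total lift: an effective generalized axial function `A` for the same `(G, θ, λ)` with
values in `ℝ^d` (`d` the valency), together with a surjective linear map `L` with `α = L ∘ A`. -/
def HasTotalLift (G : SimpleGraph V) (θ : GraphConn G) (lam : CompatSys G)
    (α : AxialFn G W) (d : ℕ) : Prop :=
  ∃ A : AxialFn G (Fin d → ℝ),
    IsGenAxial G θ lam A ∧ EffectiveAxial G A ∧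
    ∃ L : (Fin d → ℝ) →ₗ[ℝ] W, Function.Surjective L ∧
      ∀ ⦃p q : V⦄ (h : G.Adj p q), α h = L (A h)

/-- Equivalence of generalized 1-skeleta on the same graph-connection pair. -/
def EquivGenSkel (G : SimpleGraph V) (θ : GraphConn G) (lam lam' : CompatSys G)
    (α α' : AxialFn G W) : Prop :=
  ∃ κ : ∀ ⦃p q : V⦄, G.Adj p q → ℝ,
    (∀ ⦃p q : V⦄ (h : G.Adj p q), 0 < κ h) ∧
    (∀ ⦃p q : V⦄ (h : G.Adj p q), α h = κ h • α' h) ∧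
    (∀ ⦃p q : V⦄ (h : G.Adj p q) (e : ↥(G.neighborSet p)),
        lam h e = (κ (nadj e) / κ (nadj (θ h e))) * lam' h e)

/-- The graph whose edges are the edges of `G` with axial vector in the subspace `Hs`. -/
def sliceGraph (G : SimpleGraph V) (α : AxialFn G W) (Hs : Submodule ℝ W) :
    SimpleGraph V where
  Adj p q := ∃ h : G.Adj p q, α h ∈ Hs ∧ α h.symm ∈ Hs
  symm := by
    constructor
    intro p q ⟨h, h1, h2⟩
    exact ⟨h.symm, h2, h1⟩
  loopless := by
    constructor
    intro p ⟨h, _⟩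
    exact G.irrefl h

/-- The connected component of `v` in the slice graph, as a subgraph of `G`. -/
def sliceComponent (G : SimpleGraph V) (α : AxialFn G W) (Hs : Submodule ℝ W) (v : V) :
    G.Subgraph where
  verts := {w : V | (sliceGraph G α Hs).Reachable v w}
  Adj p q := (sliceGraph G α Hs).Adj p q ∧ (sliceGraph G α Hs).Reachable v p ∧
    (sliceGraph G α Hs).Reachable v q
  adj_sub := fun h => h.1.1
  edge_vert := fun h => h.2.1
  symm := ⟨fun p q h => ⟨h.1.symm, h.2.2, h.2.1⟩⟩

/-- Pointedness of a subgraph (e.g. a slice): for every covector nonvanishing on its edges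
there is a unique source vertex. -/
def SubPointed {G : SimpleGraph V} (α : AxialFn G W) (H : G.Subgraph) : Prop :=
  ∀ ξ : W →ₗ[ℝ] ℝ, (∀ ⦃p q : V⦄ (h : H.Adj p q), ξ (α (H.adj_sub h)) ≠ 0) →
    ∃! p : V, p ∈ H.verts ∧ ∀ ⦃q : V⦄ (h : H.Adj p q), 0 < ξ (α (H.adj_sub h))

/-- Pointedness of the whole skeleton: for every generic covector there is a unique source. -/
def PointedSkel (G : SimpleGraph V) (α : AxialFn G W) : Prop :=
  ∀ ξ : W →ₗ[ℝ] ℝ, GenericCovec G α ξ →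
    ∃! p : V, ∀ ⦃q : V⦄ (h : G.Adj p q), 0 < ξ (α h)

/-- A 3-independent 1-skeleton is noncyclic if it admits a polarizing covector and every
2-slice is pointed. -/
def Noncyclic (G : SimpleGraph V) (α : AxialFn G W) : Prop :=
  kIndep G α 3 ∧ (∃ ξ : W →ₗ[ℝ] ℝ, PolarizingCovec G α ξ) ∧
  ∀ (Hs : Submodule ℝ W), Module.finrank ℝ ↥Hs = 2 → ∀ v : V,
    SubPointed α (sliceComponent G α Hs v)

/-- A `d`-valent `d`-independent 1-skeleton is toral if every slice is pointed. -/
def Toral (G : SimpleGraph V) (α : AxialFn G W) : Prop :=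
  ∀ (Hs : Submodule ℝ W) (v : V), SubPointed α (sliceComponent G α Hs v)

end Sub
section CrossSection

variable {Vc : Type u'} {W : Type v} [AddCommGroup W] [Module ℝ W]

/-- Specification of the *down* `c`-cross-section of a reducible 1-skeleton `(G, θ, λ, α)`
with polarizing covector `ξ`, compatible Morse function `φ`, and regular value `c`.
`νm` identifies the vertices of the cross-section graph `Gc` with the oriented edges of `G`
at `c`-level; `face` assigns to each oriented edge of `Gc` the corresponding 2-face of `G`
at `c`-level; `θc`, `λc`, `αc` are the down connection, down compatibility system and down
axial function, characterized by normal transport along lower paths. -/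
structure IsDownCrossSection (G : SimpleGraph V) (θ : GraphConn G) (lam : CompatSys G)
    (α : AxialFn G W) (ξ : W →ₗ[ℝ] ℝ) (φ : V → ℝ) (c : ℝ)
    (Gc : SimpleGraph Vc) (νm : Vc → V × V) (θc : GraphConn Gc) (lamc : CompatSys Gc)
    (αc : AxialFn Gc ↥(LinearMap.ker ξ))
    (face : ∀ ⦃x y : Vc⦄, Gc.Adj x y → G.Subgraph) : Prop where
  nu_inj : Function.Injective νm
  nu_level : ∀ x : Vc, ∃ _ : G.Adj (νm x).1 (νm x).2, φ (νm x).1 < c ∧ c < φ (νm x).2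
  nu_surj : ∀ ⦃p q : V⦄, G.Adj p q → φ p < c → c < φ q → ∃ x : Vc, νm x = (p, q)
  conn_c : IsConnection Gc θc
  compat_c : IsCompatSystem Gc θc lamc
  face_two : ∀ ⦃x y : Vc⦄ (h : Gc.Adj x y), IsTwoFace θ α ξ (face h)
  face_symm : ∀ ⦃x y : Vc⦄ (h : Gc.Adj x y), face h.symm = face h
  face_init : ∀ ⦃x y : Vc⦄ (h : Gc.Adj x y), (face h).Adj (νm x).1 (νm x).2
  face_inj : ∀ ⦃x y y' : Vc⦄ (h : Gc.Adj x y) (h' : Gc.Adj x y'), face h = face h' → y = y'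
  face_surj : ∀ Q : G.Subgraph, IsTwoFace θ α ξ Q →
      ∀ ⦃p q : V⦄, Q.Adj p q → φ p < c → c < φ q →
        ∃ (x y : Vc) (h : Gc.Adj x y), νm x = (p, q) ∧ face h = Q
  conn_spec : ∀ ⦃x y : Vc⦄ (h : Gc.Adj x y) (x' : ↥(Gc.neighborSet x)), (↑x' : Vc) ≠ y →
      ∀ e : ↥(G.neighborSet (νm x).1),
        (face (nadj x')).Adj (νm x).1 ↑e → (↑e : V) ≠ (νm x).2 →
      ∀ e' : ↥(G.neighborSet (νm y).1),
        (face (nadj (θc h x'))).Adj (νm y).1 ↑e' → (↑e' : V) ≠ (νm y).2 →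
      ∀ (wlk : G.Walk (νm x).1 (νm y).1), WalkIn (face h) wlk →
        (∀ z ∈ wlk.support, φ z < c) →
        transport θ wlk e = e'
  lam_spec : ∀ ⦃x y : Vc⦄ (h : Gc.Adj x y) (x' : ↥(Gc.neighborSet x)), (↑x' : Vc) ≠ y →
      ∀ e : ↥(G.neighborSet (νm x).1),
        (face (nadj x')).Adj (νm x).1 ↑e → (↑e : V) ≠ (νm x).2 →
      ∀ (wlk : G.Walk (νm x).1 (νm y).1), WalkIn (face h) wlk →
        (∀ z ∈ wlk.support, φ z < c) →
        transNum θ lam wlk e = lamc h x'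
  alpha_spec : ∀ ⦃x y : Vc⦄ (h : Gc.Adj x y) (hpq : G.Adj (νm x).1 (νm x).2)
      (e : ↥(G.neighborSet (νm x).1)),
      (face h).Adj (νm x).1 ↑e → (↑e : V) ≠ (νm x).2 →
      (↑(αc h) : W) = α (nadj e) - (ξ (α (nadj e)) / ξ (α hpq)) • α hpq

/-- Specification of the *up* `c`-cross-section; as `IsDownCrossSection`, but using normal
transport along upper paths and the up axial function. -/
structure IsUpCrossSection (G : SimpleGraph V) (θ : GraphConn G) (lam : CompatSys G)
    (α : AxialFn G W) (ξ : W →ₗ[ℝ] ℝ) (φ : V → ℝ) (c : ℝ)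
    (Gc : SimpleGraph Vc) (νm : Vc → V × V) (θc : GraphConn Gc) (lamc : CompatSys Gc)
    (αc : AxialFn Gc ↥(LinearMap.ker ξ))
    (face : ∀ ⦃x y : Vc⦄, Gc.Adj x y → G.Subgraph) : Prop where
  nu_inj : Function.Injective νm
  nu_level : ∀ x : Vc, ∃ _ : G.Adj (νm x).1 (νm x).2, φ (νm x).1 < c ∧ c < φ (νm x).2
  nu_surj : ∀ ⦃p q : V⦄, G.Adj p q → φ p < c → c < φ q → ∃ x : Vc, νm x = (p, q)
  conn_c : IsConnection Gc θc
  compat_c : IsCompatSystem Gc θc lamc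
  face_two : ∀ ⦃x y : Vc⦄ (h : Gc.Adj x y), IsTwoFace θ α ξ (face h)
  face_symm : ∀ ⦃x y : Vc⦄ (h : Gc.Adj x y), face h.symm = face h
  face_init : ∀ ⦃x y : Vc⦄ (h : Gc.Adj x y), (face h).Adj (νm x).1 (νm x).2
  face_inj : ∀ ⦃x y y' : Vc⦄ (h : Gc.Adj x y) (h' : Gc.Adj x y'), face h = face h' → y = y'
  face_surj : ∀ Q : G.Subgraph, IsTwoFace θ α ξ Q →
      ∀ ⦃p q : V⦄, Q.Adj p q → φ p < c → c < φ q →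
        ∃ (x y : Vc) (h : Gc.Adj x y), νm x = (p, q) ∧ face h = Q
  conn_spec : ∀ ⦃x y : Vc⦄ (h : Gc.Adj x y) (x' : ↥(Gc.neighborSet x)), (↑x' : Vc) ≠ y →
      ∀ e : ↥(G.neighborSet (νm x).2),
        (face (nadj x')).Adj (νm x).2 ↑e → (↑e : V) ≠ (νm x).1 →
      ∀ e' : ↥(G.neighborSet (νm y).2),
        (face (nadj (θc h x'))).Adj (νm y).2 ↑e' → (↑e' : V) ≠ (νm y).1 →
      ∀ (wlk : G.Walk (νm x).2 (νm y).2), WalkIn (face h) wlk →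
        (∀ z ∈ wlk.support, c < φ z) →
        transport θ wlk e = e'
  lam_spec : ∀ ⦃x y : Vc⦄ (h : Gc.Adj x y) (x' : ↥(Gc.neighborSet x)), (↑x' : Vc) ≠ y →
      ∀ e : ↥(G.neighborSet (νm x).2),
        (face (nadj x')).Adj (νm x).2 ↑e → (↑e : V) ≠ (νm x).1 →
      ∀ (wlk : G.Walk (νm x).2 (νm y).2), WalkIn (face h) wlk →
        (∀ z ∈ wlk.support, c < φ z) →
        transNum θ lam wlk e = lamc h x'
  alpha_spec : ∀ ⦃x y : Vc⦄ (h : Gc.Adj x y) (hpq : G.Adj (νm x).1 (νm x).2)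
      (e : ↥(G.neighborSet (νm x).2)),
      (face h).Adj (νm x).2 ↑e → (↑e : V) ≠ (νm x).1 →
      (↑(αc h) : W) = α (nadj e) - (ξ (α (nadj e)) / ξ (α hpq.symm)) • α hpq.symm

end CrossSection
section BlowUp

variable {V' : Type u'} {W : Type v} [AddCommGroup W] [Module ℝ W]

/-- A blow-up system for the subskeleton `H`: positive scalars on the normal edges with
`n(e') = λ_e(e') · n(θ_e(e'))` along edges of `H`. -/
def IsBlowUpSystem {G : SimpleGraph V} (θ : GraphConn G) (lam : CompatSys G)
    (H : G.Subgraph) (n : ∀ p : V, ↥(G.neighborSet p) → ℝ) : Prop :=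
  (∀ p ∈ H.verts, ∀ e : ↥(G.neighborSet p), ¬ H.Adj p ↑e → 0 < n p e) ∧
  (∀ ⦃p q : V⦄ (h : H.Adj p q) (e : ↥(G.neighborSet p)), ¬ H.Adj p ↑e →
      n p e = lam (H.adj_sub h) e * n q (θ (H.adj_sub h) e))

/-- No normal edge of `H` has its terminal vertex in `H`. -/
def NoChord {G : SimpleGraph V} (H : G.Subgraph) : Prop :=
  ∀ p ∈ H.verts, ∀ e : ↥(G.neighborSet p), ¬ H.Adj p ↑e → (↑e : V) ∉ H.verts

/-- Specification of the blow-up `(G', θ', λ', α')` of the generalized 1-skeleton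
`(G, θ, λ, α)` along the subskeleton `H`, with respect to the blow-up system `n`.
`β` is the blow-down map on vertices and `z p e` is the singular-locus vertex `z^p_e`
(for `p ∈ H.verts` and `e` normal to `H` at `p`). -/
structure IsBlowUp (G : SimpleGraph V) (θ : GraphConn G) (lam : CompatSys G)
    (α : AxialFn G W) (H : G.Subgraph) (n : ∀ p : V, ↥(G.neighborSet p) → ℝ)
    (G' : SimpleGraph V') (θ' : GraphConn G') (lam' : CompatSys G') (α' : AxialFn G' W)
    (β : V' → V) (z : ∀ p : V, ↥(G.neighborSet p) → V') : Prop where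
  conn' : IsConnection G' θ'
  compat' : IsCompatSystem G' θ' lam'
  beta_z : ∀ p ∈ H.verts, ∀ e : ↥(G.neighborSet p), ¬ H.Adj p ↑e → β (z p e) = p
  z_inj : ∀ ⦃p p' : V⦄, p ∈ H.verts → p' ∈ H.verts →
      ∀ ⦃e : ↥(G.neighborSet p)⦄ ⦃e' : ↥(G.neighborSet p')⦄,
        ¬ H.Adj p ↑e → ¬ H.Adj p' ↑e' → z p e = z p' e' → p = p' ∧ (↑e : V) = ↑e'
  sing_surj : ∀ x' : V', β x' ∈ H.verts →
      ∃ (p : V) (_ : p ∈ H.verts) (e : ↥(G.neighborSet p)), ¬ H.Adj p ↑e ∧ x' = z p e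
  beta_inj : ∀ ⦃x' y' : V'⦄, β x' = β y' → β x' ∉ H.verts → x' = y'
  beta_surj : ∀ x : V, x ∉ H.verts → ∃ x' : V', β x' = x
  adj_iff : ∀ x' y' : V', G'.Adj x' y' ↔
      ((β x' ∉ H.verts ∧ β y' ∉ H.verts ∧ G.Adj (β x') (β y')) ∨
       (∃ (p : V) (_ : p ∈ H.verts) (e : ↥(G.neighborSet p)) (_ : ¬ H.Adj p ↑e),
          (x' = z p e ∧ β y' = ↑e ∧ β y' ∉ H.verts) ∨
          (y' = z p e ∧ β x' = ↑e ∧ β x' ∉ H.verts)) ∨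
       (∃ (p : V) (_ : p ∈ H.verts) (e e' : ↥(G.neighborSet p))
          (_ : ¬ H.Adj p ↑e) (_ : ¬ H.Adj p ↑e'),
          (↑e : V) ≠ ↑e' ∧ x' = z p e ∧ y' = z p e') ∨
       (∃ (p q : V) (hpq : H.Adj p q) (e : ↥(G.neighborSet p)) (_ : ¬ H.Adj p ↑e),
          x' = z p e ∧ y' = z q (θ (H.adj_sub hpq) e)))
  proj_adj : ∀ ⦃x' w' : V'⦄, G'.Adj x' w' → β x' ∉ H.verts → G.Adj (β x') (β w')
  -- axial function
  alpha_ns : ∀ ⦃x' y' : V'⦄ (h' : G'.Adj x' y'), β x' ∉ H.verts →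
      ∀ (h : G.Adj (β x') (β y')), α' h' = α h
  alpha_t : ∀ ⦃p : V⦄, p ∈ H.verts → ∀ (e : ↥(G.neighborSet p)), ¬ H.Adj p ↑e →
      ∀ ⦃y' : V'⦄ (h' : G'.Adj (z p e) y'), β y' = ↑e →
        α' h' = (n p e)⁻¹ • α (nadj e)
  alpha_h : ∀ ⦃p q : V⦄ (hpq : H.Adj p q) (e : ↥(G.neighborSet p)), ¬ H.Adj p ↑e →
      ∀ (h' : G'.Adj (z p e) (z q (θ (H.adj_sub hpq) e))), α' h' = α (H.adj_sub hpq)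
  alpha_v : ∀ ⦃p : V⦄, p ∈ H.verts →
      ∀ (e e' : ↥(G.neighborSet p)), ¬ H.Adj p ↑e → ¬ H.Adj p ↑e' → (↑e : V) ≠ ↑e' →
      ∀ (h' : G'.Adj (z p e) (z p e')),
        α' h' = α (nadj e') - (n p e' / n p e) • α (nadj e)
  -- connection, on edges not issuing from the singular locus
  conn_ns : ∀ ⦃x' y' : V'⦄ (h' : G'.Adj x' y'), β x' ∉ H.verts → β y' ∉ H.verts →
      ∀ (h : G.Adj (β x') (β y')) (w' : ↥(G'.neighborSet x')) (w : ↥(G.neighborSet (β x'))),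
        (↑w : V) = β ↑w' → β ↑(θ' h' w') = ↑(θ h w)
  -- connection along `z^p_e → t(e)`
  conn_t_v : ∀ ⦃p : V⦄, p ∈ H.verts → ∀ (e : ↥(G.neighborSet p)), ¬ H.Adj p ↑e →
      ∀ ⦃y' : V'⦄ (h' : G'.Adj (z p e) y'), β y' = ↑e →
      ∀ (e'' : ↥(G.neighborSet p)), ¬ H.Adj p ↑e'' → (↑e'' : V) ≠ ↑e →
      ∀ (w' : ↥(G'.neighborSet (z p e))), (↑w' : V') = z p e'' →
        β ↑(θ' h' w') = ↑(θ (nadj e) e'')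
  conn_t_h : ∀ ⦃p : V⦄, p ∈ H.verts → ∀ (e : ↥(G.neighborSet p)), ¬ H.Adj p ↑e →
      ∀ ⦃y' : V'⦄ (h' : G'.Adj (z p e) y'), β y' = ↑e →
      ∀ ⦃r : V⦄ (hpr : H.Adj p r)
        (w' : ↥(G'.neighborSet (z p e))), (↑w' : V') = z r (θ (H.adj_sub hpr) e) →
      ∀ (rr : ↥(G.neighborSet p)), (↑rr : V) = r →
        β ↑(θ' h' w') = ↑(θ (nadj e) rr)
  -- connection along a horizontal edge `z^p_e → z^q_f`
  conn_h_t : ∀ ⦃p q : V⦄ (hpq : H.Adj p q) (e : ↥(G.neighborSet p)), ¬ H.Adj p ↑e →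
      ∀ (h' : G'.Adj (z p e) (z q (θ (H.adj_sub hpq) e)))
        (w' : ↥(G'.neighborSet (z p e))), β ↑w' = ↑e →
        β ↑(θ' h' w') = ↑(θ (H.adj_sub hpq) e)
  conn_h_v : ∀ ⦃p q : V⦄ (hpq : H.Adj p q) (e : ↥(G.neighborSet p)), ¬ H.Adj p ↑e →
      ∀ (h' : G'.Adj (z p e) (z q (θ (H.adj_sub hpq) e)))
        (e'' : ↥(G.neighborSet p)), ¬ H.Adj p ↑e'' → (↑e'' : V) ≠ ↑e →
      ∀ (w' : ↥(G'.neighborSet (z p e))), (↑w' : V') = z p e'' →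
        (↑(θ' h' w') : V') = z q (θ (H.adj_sub hpq) e'')
  conn_h_h : ∀ ⦃p q : V⦄ (hpq : H.Adj p q) (e : ↥(G.neighborSet p)), ¬ H.Adj p ↑e →
      ∀ (h' : G'.Adj (z p e) (z q (θ (H.adj_sub hpq) e)))
        ⦃r : V⦄ (hpr : H.Adj p r)
        (w' : ↥(G'.neighborSet (z p e))), (↑w' : V') = z r (θ (H.adj_sub hpr) e) →
      ∀ (rr : ↥(G.neighborSet p)), (↑rr : V) = r →
      ∀ (s : V), s = ↑(θ (H.adj_sub hpq) rr) →
      ∀ (hqs : H.Adj q s),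
        (↑(θ' h' w') : V') = z s (θ (H.adj_sub hqs) (θ (H.adj_sub hpq) e))
  -- connection along a vertical edge `z^p_e → z^p_{e'}`
  conn_v_t : ∀ ⦃p : V⦄, p ∈ H.verts →
      ∀ (e e' : ↥(G.neighborSet p)), ¬ H.Adj p ↑e → ¬ H.Adj p ↑e' → (↑e : V) ≠ ↑e' →
      ∀ (h' : G'.Adj (z p e) (z p e')) (w' : ↥(G'.neighborSet (z p e))), β ↑w' = ↑e →
        β ↑(θ' h' w') = ↑e'
  conn_v_h : ∀ ⦃p : V⦄, p ∈ H.verts →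
      ∀ (e e' : ↥(G.neighborSet p)), ¬ H.Adj p ↑e → ¬ H.Adj p ↑e' → (↑e : V) ≠ ↑e' →
      ∀ (h' : G'.Adj (z p e) (z p e')) ⦃r : V⦄ (hpr : H.Adj p r)
        (w' : ↥(G'.neighborSet (z p e))), (↑w' : V') = z r (θ (H.adj_sub hpr) e) →
        (↑(θ' h' w') : V') = z r (θ (H.adj_sub hpr) e')
  conn_v_v : ∀ ⦃p : V⦄, p ∈ H.verts →
      ∀ (e e' e'' : ↥(G.neighborSet p)), ¬ H.Adj p ↑e → ¬ H.Adj p ↑e' → ¬ H.Adj p ↑e'' →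
        (↑e : V) ≠ ↑e' → (↑e'' : V) ≠ ↑e → (↑e'' : V) ≠ ↑e' →
      ∀ (h' : G'.Adj (z p e) (z p e')) (w' : ↥(G'.neighborSet (z p e))),
        (↑w' : V') = z p e'' → (↑(θ' h' w') : V') = z p e''
  -- compatibility system
  lam_ns : ∀ ⦃x' y' : V'⦄ (h' : G'.Adj x' y'), β x' ∉ H.verts →
      ∀ (h : G.Adj (β x') (β y')) (w' : ↥(G'.neighborSet x')) (w : ↥(G.neighborSet (β x'))),
        (↑w : V) = β ↑w' → lam' h' w' = lam h w
  lam_t_v : ∀ ⦃p : V⦄, p ∈ H.verts → ∀ (e : ↥(G.neighborSet p)), ¬ H.Adj p ↑e →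
      ∀ ⦃y' : V'⦄ (h' : G'.Adj (z p e) y'), β y' = ↑e →
      ∀ (e'' : ↥(G.neighborSet p)), ¬ H.Adj p ↑e'' → (↑e'' : V) ≠ ↑e →
      ∀ (w' : ↥(G'.neighborSet (z p e))), (↑w' : V') = z p e'' →
        lam' h' w' = lam (nadj e) e''
  lam_t_h : ∀ ⦃p : V⦄, p ∈ H.verts → ∀ (e : ↥(G.neighborSet p)), ¬ H.Adj p ↑e →
      ∀ ⦃y' : V'⦄ (h' : G'.Adj (z p e) y'), β y' = ↑e →
      ∀ ⦃r : V⦄ (hpr : H.Adj p r)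
        (w' : ↥(G'.neighborSet (z p e))), (↑w' : V') = z r (θ (H.adj_sub hpr) e) →
      ∀ (rr : ↥(G.neighborSet p)), (↑rr : V) = r →
        lam' h' w' = lam (nadj e) rr
  lam_h_t : ∀ ⦃p q : V⦄ (hpq : H.Adj p q) (e : ↥(G.neighborSet p)), ¬ H.Adj p ↑e →
      ∀ (h' : G'.Adj (z p e) (z q (θ (H.adj_sub hpq) e)))
        (w' : ↥(G'.neighborSet (z p e))), β ↑w' = ↑e → lam' h' w' = 1
  lam_h_v : ∀ ⦃p q : V⦄ (hpq : H.Adj p q) (e : ↥(G.neighborSet p)), ¬ H.Adj p ↑e →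
      ∀ (h' : G'.Adj (z p e) (z q (θ (H.adj_sub hpq) e)))
        (e'' : ↥(G.neighborSet p)), ¬ H.Adj p ↑e'' → (↑e'' : V) ≠ ↑e →
      ∀ (w' : ↥(G'.neighborSet (z p e))), (↑w' : V') = z p e'' →
        lam' h' w' = lam (H.adj_sub hpq) e''
  lam_h_h : ∀ ⦃p q : V⦄ (hpq : H.Adj p q) (e : ↥(G.neighborSet p)), ¬ H.Adj p ↑e →
      ∀ (h' : G'.Adj (z p e) (z q (θ (H.adj_sub hpq) e)))
        ⦃r : V⦄ (hpr : H.Adj p r)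
        (w' : ↥(G'.neighborSet (z p e))), (↑w' : V') = z r (θ (H.adj_sub hpr) e) →
      ∀ (rr : ↥(G.neighborSet p)), (↑rr : V) = r →
        lam' h' w' = lam (H.adj_sub hpq) rr
  lam_v : ∀ ⦃p : V⦄, p ∈ H.verts →
      ∀ (e e' : ↥(G.neighborSet p)), ¬ H.Adj p ↑e → ¬ H.Adj p ↑e' → (↑e : V) ≠ ↑e' →
      ∀ (h' : G'.Adj (z p e) (z p e')) (w' : ↥(G'.neighborSet (z p e))),
        lam' h' w' = 1

end BlowUp
section Misc

variable {W : Type v} [AddCommGroup W] [Module ℝ W]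

/-- The induced subgraph of `G` on a set of vertices. -/
def inducedSub (G : SimpleGraph V) (s : Set V) : G.Subgraph where
  verts := s
  Adj p q := G.Adj p q ∧ p ∈ s ∧ q ∈ s
  adj_sub := fun h => h.1
  edge_vert := fun h => h.2.1
  symm := ⟨fun _ _ h => ⟨h.1.symm, h.2.2, h.2.1⟩⟩

/-- The graph of the direct product of a graph with the interval. -/
def prodIntervalGraph (G : SimpleGraph V) : SimpleGraph (V × Bool) where
  Adj x y := (x.2 = y.2 ∧ G.Adj x.1 y.1) ∨ (x.1 = y.1 ∧ x.2 ≠ y.2)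
  symm := by
    constructor
    rintro x y (⟨h1, h2⟩ | ⟨h1, h2⟩)
    · exact Or.inl ⟨h1.symm, h2.symm⟩
    · exact Or.inr ⟨h1.symm, Ne.symm h2⟩
  loopless := by
    constructor
    rintro x (⟨_, h⟩ | ⟨_, h⟩)
    · exact G.irrefl h
    · exact h rfl

/-- Specification of the direct product of the generalized 1-skeleton `(G, θ, λ, α)` in `W`
with the interval 1-skeleton `(I, α_I, θ_I, λ_I)` in `ℝ`: the result is the quadruple
`(prodIntervalGraph G, θ', λ', α')` in `W × ℝ`. -/
structure IsIntervalProduct (G : SimpleGraph V) (θ : GraphConn G) (lam : CompatSys G)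
    (α : AxialFn G W) (θ' : GraphConn (prodIntervalGraph G))
    (lam' : CompatSys (prodIntervalGraph G))
    (α' : AxialFn (prodIntervalGraph G) (W × ℝ)) : Prop where
  conn' : IsConnection (prodIntervalGraph G) θ'
  compat' : IsCompatSystem (prodIntervalGraph G) θ' lam'
  alpha_hor : ∀ ⦃x y : V × Bool⦄ (h' : (prodIntervalGraph G).Adj x y) (h : G.Adj x.1 y.1),
      x.2 = y.2 → α' h' = (α h, 0)
  alpha_up : ∀ ⦃x y : V × Bool⦄ (h' : (prodIntervalGraph G).Adj x y),
      x.1 = y.1 → x.2 = false → α' h' = (0, 1)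
  alpha_down : ∀ ⦃x y : V × Bool⦄ (h' : (prodIntervalGraph G).Adj x y),
      x.1 = y.1 → x.2 = true → α' h' = (0, -1)
  conn_hor_hor : ∀ ⦃x y : V × Bool⦄ (h' : (prodIntervalGraph G).Adj x y) (h : G.Adj x.1 y.1),
      x.2 = y.2 → ∀ (w' : ↥((prodIntervalGraph G).neighborSet x)) (w : ↥(G.neighborSet x.1)),
        (↑w' : V × Bool) = (↑w, x.2) → (↑(θ' h' w') : V × Bool) = (↑(θ h w), x.2)
  conn_hor_ver : ∀ ⦃x y : V × Bool⦄ (h' : (prodIntervalGraph G).Adj x y),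
      x.2 = y.2 → ∀ (w' : ↥((prodIntervalGraph G).neighborSet x)),
        (↑w' : V × Bool) = (x.1, !x.2) → (↑(θ' h' w') : V × Bool) = (y.1, !x.2)
  conn_ver_hor : ∀ ⦃x y : V × Bool⦄ (h' : (prodIntervalGraph G).Adj x y),
      x.1 = y.1 → ∀ (w' : ↥((prodIntervalGraph G).neighborSet x)) (w : ↥(G.neighborSet x.1)),
        (↑w' : V × Bool) = (↑w, x.2) → (↑(θ' h' w') : V × Bool) = (↑w, y.2)
  lam_hor_hor : ∀ ⦃x y : V × Bool⦄ (h' : (prodIntervalGraph G).Adj x y) (h : G.Adj x.1 y.1),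
      x.2 = y.2 → ∀ (w' : ↥((prodIntervalGraph G).neighborSet x)) (w : ↥(G.neighborSet x.1)),
        (↑w' : V × Bool) = (↑w, x.2) → lam' h' w' = lam h w
  lam_hor_ver : ∀ ⦃x y : V × Bool⦄ (h' : (prodIntervalGraph G).Adj x y),
      x.2 = y.2 → ∀ (w' : ↥((prodIntervalGraph G).neighborSet x)),
        (↑w' : V × Bool) = (x.1, !x.2) → lam' h' w' = 1
  lam_ver : ∀ ⦃x y : V × Bool⦄ (h' : (prodIntervalGraph G).Adj x y),
      x.1 = y.1 → ∀ (w' : ↥((prodIntervalGraph G).neighborSet x)), lam' h' w' = 1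

end Misc

section Polytope

/-- `(G, A)` is the vertex–edge graph of a simple `d`-polytope `S ⊆ ℝ^d`, with
`A(uv) = v - u` along each oriented edge: `g` identifies the vertices of `G` with the
extreme points of `S = convexHull F`, `S` is full-dimensional, adjacency corresponds to
exposed one-dimensional faces (segments), and `A` is given by differences of vertices. -/
def IsPolytopeSkeleton {d : ℕ} (G : SimpleGraph V) (A : AxialFn G (Fin d → ℝ)) : Prop :=
  ∃ (F : Finset (Fin d → ℝ)) (g : V → (Fin d → ℝ)),
    affineSpan ℝ (convexHull ℝ (F : Set (Fin d → ℝ))) = ⊤ ∧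
    Function.Injective g ∧
    Set.range g = Set.extremePoints ℝ (convexHull ℝ (F : Set (Fin d → ℝ))) ∧
    (∀ p q : V, G.Adj p q ↔ (g p ≠ g q ∧
        IsExposed ℝ (convexHull ℝ (F : Set (Fin d → ℝ))) (segment ℝ (g p) (g q)))) ∧
    (∀ ⦃p q : V⦄ (h : G.Adj p q), A h = g q - g p)

end Polytope

private lemma li_pair_smul {n : ℕ} {u v : Fin n → ℝ} (hli : LinearIndependent ℝ ![u, v])
    {c d : ℝ} (hc : c ≠ 0) (hd : d ≠ 0) : LinearIndependent ℝ ![c • u, d • v] := by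
  rw [linearIndependent_fin2] at hli ⊢
  simp only [Matrix.cons_val_one, Matrix.head_cons, Matrix.cons_val_zero] at hli ⊢
  obtain ⟨hv, hav⟩ := hli
  refine ⟨smul_ne_zero hd hv, fun a ha => hav (c⁻¹ * (a * d)) ?_⟩
  have h' := congrArg (fun w => c⁻¹ • w) ha
  simp only [smul_smul, inv_mul_cancel₀ hc, one_smul] at h'
  rw [← h']

/-- Every 2-independent generalized 1-skeleton is equivalent to a 1-skeleton. -/
theorem two_independent_generalized_skeleton_equivalent_to_one_skeleton
    {V : Type u} [Fintype V] {n : ℕ}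
    (G : SimpleGraph V) (θ : GraphConn G) (lam : CompatSys G)
    (α : AxialFn G (Fin n → ℝ))
    (hgen : IsGenSkeleton G θ lam α)
    (h2 : ∀ (p : V) (e e' : ↥(G.neighborSet p)), e ≠ e' →
      LinearIndependent ℝ ![α (nadj e), α (nadj e')]) :
    ∃ (α' : AxialFn G (Fin n → ℝ)) (lam' : CompatSys G),
      IsOneSkeleton G θ lam' α' ∧ EquivGenSkel G θ lam lam' α α' := by
  classical
  obtain ⟨hconn, hθ, hlam, hax⟩ := hgen
  choose m hmpos hmspec using hax.1
  set ord : V → ℕ := fun v => ((Fintype.equivFin V) v : ℕ) with hord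
  have hordinj : Function.Injective ord := fun a b hab =>
    (Fintype.equivFin V).injective (Fin.val_injective hab)
  let κ : ∀ ⦃p q : V⦄, G.Adj p q → ℝ := fun p q h => if ord p < ord q then 1 else m h
  let α' : AxialFn G (Fin n → ℝ) := fun p q h => if ord p < ord q then α h else -α h.symm
  let lam' : CompatSys G := fun p q h e => (κ (nadj (θ h e)) / κ (nadj e)) * lam h e
  have hκpos : ∀ ⦃p q : V⦄ (h : G.Adj p q), 0 < κ h := by
    intro p q h
    show (0 : ℝ) < if ord p < ord q then 1 else m h
    split
    · exact one_pos
    · exact hmpos h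
  have hκα : ∀ ⦃p q : V⦄ (h : G.Adj p q), α h = κ h • α' h := by
    intro p q h
    show α h = (if ord p < ord q then 1 else m h) • (if ord p < ord q then α h else -α h.symm)
    split
    · rw [one_smul]
    · rw [smul_neg]; exact hmspec h
  have hα'symm : ∀ ⦃p q : V⦄ (h : G.Adj p q), α' h.symm = -α' h := by
    intro p q h
    have hne : ord p ≠ ord q := fun hh => h.ne (hordinj hh)
    show (if ord q < ord p then α h.symm else -α h.symm.symm)
        = -(if ord p < ord q then α h else -α h.symm)
    by_cases h1 : ord p < ord q
    · have h2 : ¬ ord q < ord p := by omega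
      rw [if_neg h2, if_pos h1]
    · have h2 : ord q < ord p := by omega
      rw [if_pos h2, if_neg h1, neg_neg]
  have hα'eq : ∀ ⦃p q : V⦄ (h : G.Adj p q), α' h = (κ h)⁻¹ • α h := by
    intro p q h
    rw [hκα h, smul_smul, inv_mul_cancel₀ (hκpos h).ne', one_smul]
  have hlam'pos : ∀ ⦃p q : V⦄ (h : G.Adj p q) (e : ↥(G.neighborSet p)), 0 < lam' h e := by
    intro p q h e
    exact mul_pos (div_pos (hκpos (nadj (θ h e))) (hκpos (nadj e))) (hlam.1 h e)
  have hlam'compat : ∀ ⦃p q : V⦄ (h : G.Adj p q) (e : ↥(G.neighborSet p)),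
      lam' h.symm (θ h e) = (lam' h e)⁻¹ := by
    intro p q h e
    show (κ (nadj (θ h.symm (θ h e))) / κ (nadj (θ h e))) * lam h.symm (θ h e)
        = ((κ (nadj (θ h e)) / κ (nadj e)) * lam h e)⁻¹
    have h1 : θ h.symm (θ h e) = e := by
      rw [hθ.2 h]; exact (θ h).symm_apply_apply e
    rw [h1, hlam.2 h e, mul_inv, inv_div]
  refine ⟨α', lam', ⟨⟨hconn, hθ, ⟨hlam'pos, hlam'compat⟩, ?_, ?_⟩, hα'symm, ?_⟩,
    κ, hκpos, hκα, ?_⟩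
  · -- gA1 for α'
    intro p q h
    exact ⟨1, one_pos, by rw [hα'symm h, one_smul, neg_neg]⟩
  · -- gA2 for α'
    intro p q h e hne
    obtain ⟨c, hc⟩ := hax.2 h e hne
    refine ⟨c * κ h / κ (nadj e), ?_⟩
    have ha := (hκpos (nadj e)).ne'
    have hb := (hκpos (nadj (θ h e))).ne'
    have hk := (hκpos h).ne'
    rw [hα'eq (nadj e), hα'eq (nadj (θ h e)), hα'eq h]
    show (κ (nadj e))⁻¹ • α (nadj e)
        - ((κ (nadj (θ h e)) / κ (nadj e)) * lam h e) • (κ (nadj (θ h e)))⁻¹ • α (nadj (θ h e))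
        = (c * κ h / κ (nadj e)) • (κ h)⁻¹ • α h
    rw [smul_smul, smul_smul]
    have e1 : κ (nadj (θ h e)) / κ (nadj e) * lam h e * (κ (nadj (θ h e)))⁻¹
        = (κ (nadj e))⁻¹ * lam h e := by
      field_simp
    have e2 : c * κ h / κ (nadj e) * (κ h)⁻¹ = (κ (nadj e))⁻¹ * c := by
      field_simp
    rw [e1, e2, mul_smul, mul_smul, ← smul_sub, hc]
  · -- pairwise linear independence
    intro p e e' hee
    rw [hα'eq (nadj e), hα'eq (nadj e')]
    exact li_pair_smul (h2 p e e' hee) (inv_ne_zero (hκpos (nadj e)).ne')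
      (inv_ne_zero (hκpos (nadj e')).ne')
  · -- lam relation for equivalence
    intro p q h e
    show lam h e = (κ (nadj e) / κ (nadj (θ h e))) * ((κ (nadj (θ h e)) / κ (nadj e)) * lam h e)
    have ha := (hκpos (nadj e)).ne'
    have hb := (hκpos (nadj (θ h e))).ne'
    field_simp
end

section
/- Let (Γ, α, θ) be a toral d-valent d-independent 1-skeleton in ℝ^d, and for each vertex p let X_p = {u ∈ (ℝ^d)* : ⟨u, α(e)⟩ ≥ 0 for all e ∈ E^p}. Then for any two vertices p and q there is a subset S ⊆ E^p such that X_p ∩ X_q = {u ∈ X_p : ⟨u, α(e)⟩ = 0 for all e ∈ S}; in particular X_p ∩ X_q is a face of the simplicial cone X_p (and, symmetrically, a face of X_q). -/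
open SimpleGraph

universe u u' v

variable {V : Type u}

/-- The polyhedral cone `X_p` dual to the axial vectors at `p`. -/
def XCone {V : Type u} {d : ℕ} (G : SimpleGraph V) (α : AxialFn G (Fin d → ℝ)) (p : V) :
    Set ((Fin d → ℝ) →ₗ[ℝ] ℝ) :=
  {u | ∀ ⦃q : V⦄ (h : G.Adj p q), 0 ≤ u (α h)}

section FaceProofAux

variable {d : ℕ} {G : SimpleGraph V} {θ : GraphConn G} {lam : CompatSys G}
  {α : AxialFn G (Fin d → ℝ)}

private lemma full_indep [Fintype V] (hd : Valency G d) (hind : kIndep G α d) (p : V) :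
    LinearIndependent ℝ (fun e : ↥(G.neighborSet p) => α (nadj e)) := by
  classical
  haveI : Fintype ↥(G.neighborSet p) := (Set.toFinite _).fintype
  have hcard : (Finset.univ : Finset ↥(G.neighborSet p)).card = d := by
    rw [Finset.card_univ, ← Nat.card_eq_fintype_card, Nat.card_coe_set_eq, hd p]
  have hli := hind p Finset.univ hcard
  have h2 := hli.comp (fun e : ↥(G.neighborSet p) =>
      (⟨e, Finset.mem_coe.mpr (Finset.mem_univ e)⟩ :
        ↥((Finset.univ : Finset ↥(G.neighborSet p)) : Set ↥(G.neighborSet p))))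
      (fun x y hxy => by simpa [Subtype.ext_iff] using hxy)
  exact h2

private lemma alpha_ne_zero [Fintype V] (hd : Valency G d) (hind : kIndep G α d)
    {a b : V} (h : G.Adj a b) : α h ≠ 0 := by
  classical
  haveI : Fintype ↥(G.neighborSet a) := (Set.toFinite _).fintype
  have := (full_indep hd hind a).ne_zero (⟨b, h⟩ : ↥(G.neighborSet a))
  exact this

private lemma exists_generic_pos [Fintype V] (hd : Valency G d) (hind : kIndep G α d)
    (q : V) :
    ∃ η : (Fin d → ℝ) →ₗ[ℝ] ℝ,
      (∀ e : ↥(G.neighborSet q), 0 < η (α (nadj e))) ∧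
      (∀ ⦃a b : V⦄ (h : G.Adj a b), η (α h) ≠ 0) := by
  classical
  haveI : Fintype ↥(G.neighborSet q) := (Set.toFinite _).fintype
  rcases isEmpty_or_nonempty ↥(G.neighborSet q) with hemp | hne
  · refine ⟨0, fun e => (hemp.false e).elim, ?_⟩
    intro a b h
    exfalso
    have hq0 : G.neighborSet q = ∅ := Set.isEmpty_coe_sort.mp hemp
    have hd0 : d = 0 := by
      have := hd q
      rw [hq0, Set.ncard_empty] at this
      omega
    have ha : (G.neighborSet a).ncard = 0 := by rw [hd a, hd0]
    have ha2 : G.neighborSet a = ∅ := (Set.ncard_eq_zero (Set.toFinite _)).mp ha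
    have : b ∈ G.neighborSet a := h
    rw [ha2] at this
    exact this
  · -- basis from the axial vectors at q
    have hli := full_indep hd hind q
    have hcard : Fintype.card ↥(G.neighborSet q) = Module.finrank ℝ (Fin d → ℝ) := by
      rw [Module.finrank_fin_fun, ← Nat.card_eq_fintype_card, Nat.card_coe_set_eq, hd q]
    set B : Module.Basis ↥(G.neighborSet q) ℝ (Fin d → ℝ) :=
      basisOfLinearIndependentOfCardEqFinrank hli hcard with hBdef
    have hBe : ∀ e, B e = α (nadj e) := by
      intro e
      rw [hBdef, coe_basisOfLinearIndependentOfCardEqFinrank]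
    set ψ : (Fin d → ℝ) → ((↥(G.neighborSet q) → ℝ) →ₗ[ℝ] ℝ) := fun w =>
      ∑ i, (B.coord i w) • (LinearMap.proj i : (↥(G.neighborSet q) → ℝ) →ₗ[ℝ] ℝ) with hψdef
    have hψ_apply : ∀ w c, ψ w c = ∑ i, c i * B.coord i w := by
      intro w c
      rw [hψdef]
      simp [LinearMap.sum_apply, LinearMap.smul_apply, LinearMap.proj_apply, smul_eq_mul,
        mul_comm]
    have hψ_ne : ∀ w : Fin d → ℝ, w ≠ 0 → ∃ c, ψ w c ≠ 0 := by
      intro w hw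
      have hex : ∃ i, B.coord i w ≠ 0 := by
        by_contra hall
        push_neg at hall
        apply hw
        have hrepr : B.repr w = 0 := by
          ext i
          simpa [Module.Basis.coord_apply] using hall i
        have := congrArg B.repr.symm hrepr
        simpa using this
      obtain ⟨i, hi⟩ := hex
      refine ⟨Pi.single i 1, ?_⟩
      rw [hψ_apply, Finset.sum_eq_single i]
      · simpa using hi
      · intro j _ hj
        simp [Pi.single_eq_of_ne hj]
      · intro hmem
        exact absurd (Finset.mem_univ i) hmem
    -- density of the good set
    have hdense : Dense (⋂ x : V × V, {c : ↥(G.neighborSet q) → ℝ |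
        ∀ h : G.Adj x.1 x.2, ψ (α h) c ≠ 0}) := by
      have hSS : ∀ x : V × V, IsOpen {c : ↥(G.neighborSet q) → ℝ |
          ∀ h : G.Adj x.1 x.2, ψ (α h) c ≠ 0} ∧ Dense {c : ↥(G.neighborSet q) → ℝ |
          ∀ h : G.Adj x.1 x.2, ψ (α h) c ≠ 0} := by
        intro x
        by_cases hx : G.Adj x.1 x.2
        · have hset : {c : ↥(G.neighborSet q) → ℝ | ∀ h : G.Adj x.1 x.2, ψ (α h) c ≠ 0}
              = {c | ψ (α hx) c ≠ 0} := by
            ext c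
            exact ⟨fun hc => hc hx, fun hc h => hc⟩
          rw [hset]
          have hcont : Continuous (ψ (α hx)) := LinearMap.continuous_of_finiteDimensional _
          constructor
          · have : {c : ↥(G.neighborSet q) → ℝ | ψ (α hx) c ≠ 0}
                = (ψ (α hx) ⁻¹' {0})ᶜ := by
              ext c; simp
            rw [this]
            exact (IsClosed.preimage hcont isClosed_singleton).isOpen_compl
          · rw [dense_iff_inter_open]
            intro U hU hUne
            obtain ⟨c, hcU⟩ := hUne
            by_cases hc0 : ψ (α hx) c = 0
            · obtain ⟨c₀, hc₀⟩ := hψ_ne (α hx) (alpha_ne_zero hd hind hx)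
              have hf : Continuous fun t : ℝ => c + t • c₀ :=
                continuous_const.add (continuous_id.smul continuous_const)
              have h0mem : (0 : ℝ) ∈ (fun t : ℝ => c + t • c₀) ⁻¹' U := by
                simp [hcU]
              obtain ⟨ε, hε, hball⟩ := Metric.isOpen_iff.mp (hU.preimage hf) 0 h0mem
              refine ⟨c + (ε / 2) • c₀, hball ?_, ?_⟩
              · rw [Metric.mem_ball, Real.dist_eq]
                rw [sub_zero, abs_of_pos (by positivity)]
                linarith
              · show ψ (α hx) (c + (ε / 2) • c₀) ≠ 0
                rw [map_add, map_smul, hc0, smul_eq_mul, zero_add]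
                exact mul_ne_zero (by positivity) hc₀
            · exact ⟨c, hcU, hc0⟩
        · have hset : {c : ↥(G.neighborSet q) → ℝ | ∀ h : G.Adj x.1 x.2, ψ (α h) c ≠ 0}
              = Set.univ := Set.eq_univ_of_forall (fun c h => absurd h hx)
          rw [hset]
          exact ⟨isOpen_univ, dense_univ⟩
      exact dense_iInter_of_isOpen (fun x => (hSS x).1) (fun x => (hSS x).2)
    have hUopen : IsOpen {c : ↥(G.neighborSet q) → ℝ | ∀ i, 0 < c i} := by
      have : {c : ↥(G.neighborSet q) → ℝ | ∀ i, 0 < c i} = ⋂ i, {c | 0 < c i} := by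
        ext c; simp
      rw [this]
      exact isOpen_iInter_of_finite fun i => isOpen_lt continuous_const (continuous_apply i)
    obtain ⟨cD, hcD, hcU⟩ := hdense.exists_mem_open hUopen ⟨fun _ => 1, fun i => one_pos⟩
    refine ⟨∑ i, cD i • B.coord i, ?_, ?_⟩
    · intro e
      have heval : (∑ i, cD i • B.coord i) (α (nadj e)) = cD e := by
        rw [← hBe e, LinearMap.sum_apply]
        simp only [LinearMap.smul_apply, Module.Basis.coord_apply, Module.Basis.repr_self, smul_eq_mul]
        rw [Finset.sum_eq_single e]
        · simp
        · intro j _ hj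
          simp [Finsupp.single_apply, Ne.symm hj]
        · intro hmem
          exact absurd (Finset.mem_univ e) hmem
      rw [heval]
      exact hcU e
    · intro a b h
      have hmem := Set.mem_iInter.mp hcD (a, b)
      have hne' := hmem h
      have heq : (∑ i, cD i • B.coord i) (α h) = ψ (α h) cD := by
        rw [LinearMap.sum_apply, hψ_apply]
        simp [LinearMap.smul_apply, smul_eq_mul, mul_comm]
      rw [heq]
      exact hne'

private lemma exists_dom [Fintype V] (u η' : (Fin d → ℝ) →ₗ[ℝ] ℝ) :
    ∃ N : ℝ, 0 < N ∧
      ∀ ⦃a b : V⦄ (h : G.Adj a b), u (α h) ≠ 0 → |η' (α h)| < N * |u (α h)| := by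
  classical
  set g : V × V → ℝ := fun x =>
    if h : G.Adj x.1 x.2 then (if u (α h) = 0 then 0 else |η' (α h)| / |u (α h)|) else 0
    with hg
  refine ⟨1 + ∑ x : V × V, |g x|, by positivity, ?_⟩
  intro a b h hu
  have h1 : g (a, b) = |η' (α h)| / |u (α h)| := by
    rw [hg]
    simp only
    rw [dif_pos h, if_neg hu]
  have h2 : g (a, b) ≤ ∑ x : V × V, |g x| :=
    le_trans (le_abs_self _)
      (Finset.single_le_sum (f := fun x => |g x|) (fun _ _ => abs_nonneg _)
        (Finset.mem_univ (a, b)))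
  have hu0 : 0 < |u (α h)| := abs_pos.mpr hu
  have h3 : |η' (α h)| / |u (α h)| ≤ ∑ x : V × V, |g x| := h1 ▸ h2
  have h4 := (div_le_iff₀ hu0).mp h3
  nlinarith [abs_nonneg (η' (α h))]

private lemma dom_pos {u η' : (Fin d → ℝ) →ₗ[ℝ] ℝ} {N : ℝ}
    (hdom : ∀ ⦃a b : V⦄ (h : G.Adj a b), u (α h) ≠ 0 → |η' (α h)| < N * |u (α h)|)
    {a b : V} (h : G.Adj a b) (hu : 0 < u (α h)) : 0 < (N • u + η') (α h) := by
  have h1 := hdom h (ne_of_gt hu)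
  rw [abs_of_pos hu] at h1
  have h2 : -|η' (α h)| ≤ η' (α h) := neg_abs_le _
  simp only [LinearMap.add_apply, LinearMap.smul_apply, smul_eq_mul]
  linarith

private lemma dom_neg {u η' : (Fin d → ℝ) →ₗ[ℝ] ℝ} {N : ℝ}
    (hdom : ∀ ⦃a b : V⦄ (h : G.Adj a b), u (α h) ≠ 0 → |η' (α h)| < N * |u (α h)|)
    {a b : V} (h : G.Adj a b) (hu : u (α h) < 0) : (N • u + η') (α h) < 0 := by
  have h1 := hdom h (ne_of_lt hu)
  rw [abs_of_neg hu] at h1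
  have h2 : η' (α h) ≤ |η' (α h)| := le_abs_self _
  simp only [LinearMap.add_apply, LinearMap.smul_apply, smul_eq_mul]
  linarith

private lemma source_unique [Fintype V] (hsk : IsOneSkeleton G θ lam α)
    (htoral : Toral G α) (ξ : (Fin d → ℝ) →ₗ[ℝ] ℝ)
    (hgen : ∀ ⦃a b : V⦄ (h : G.Adj a b), ξ (α h) ≠ 0)
    {s₁ s₂ : V} (h₁ : ∀ ⦃b : V⦄ (h : G.Adj s₁ b), 0 < ξ (α h))
    (h₂ : ∀ ⦃b : V⦄ (h : G.Adj s₂ b), 0 < ξ (α h)) : s₁ = s₂ := by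
  have hle : G ≤ sliceGraph G α (⊤ : Submodule ℝ (Fin d → ℝ)) := by
    intro a b h
    exact ⟨h, Submodule.mem_top, Submodule.mem_top⟩
  obtain ⟨r, -, hr⟩ := htoral ⊤ s₁ ξ (by intro a b h; exact hgen _)
  have e₁ : s₁ = r := hr s₁ ⟨SimpleGraph.Reachable.refl s₁, by intro b h; exact h₁ _⟩
  have e₂ : s₂ = r := hr s₂
    ⟨SimpleGraph.Reachable.mono hle (hsk.1.connected.preconnected s₁ s₂),
      by intro b h; exact h₂ _⟩
  exact e₁.trans e₂.symm

private lemma walk_transport (hsk : IsOneSkeleton G θ lam α)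
    (u w : (Fin d → ℝ) →ₗ[ℝ] ℝ) :
    ∀ {p r : V}, (sliceGraph G α (LinearMap.ker w)).Walk p r →
    (∀ ⦃b : V⦄ (h : G.Adj p b), 0 ≤ u (α h)) →
    (∀ ⦃b : V⦄ (h : G.Adj p b), w (α h) = 0 → u (α h) = 0) →
    (∀ ⦃b : V⦄ (h : G.Adj r b), 0 ≤ u (α h)) ∧
    (∀ ⦃b : V⦄ (h : G.Adj r b), w (α h) = 0 → u (α h) = 0) := by
  intro p r wk
  induction wk with
  | nil => exact fun h1 h2 => ⟨h1, h2⟩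
  | @cons pa pb pc hadj wk ih =>
    intro hp1 hp2
    obtain ⟨hG, hk1, hk2⟩ := hadj
    have hw0 : w (α hG) = 0 := hk1
    have hu0 : u (α hG) = 0 := hp2 hG hw0
    have key : ∀ ⦃b : V⦄ (f : G.Adj pb b),
        0 ≤ u (α f) ∧ (w (α f) = 0 → u (α f) = 0) := by
      intro b f
      set e' : ↥(G.neighborSet pa) := (θ hG).symm ⟨b, f⟩ with he'
      have hee : θ hG e' = ⟨b, f⟩ := (θ hG).apply_symm_apply _
      by_cases hc : (e' : V) = pb
      · have he2 : e' = ⟨pb, hG⟩ := Subtype.ext hc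
        rw [he2, hsk.1.conn.1 hG] at hee
        have hb : pa = b := congrArg Subtype.val hee
        subst hb
        have hαf : α f = -α hG := hsk.2.1 hG
        constructor
        · rw [hαf]
          simp [hu0]
        · intro _
          rw [hαf]
          simp [hu0]
      · obtain ⟨c, hc2⟩ := hsk.1.axial.2 hG e' hc
        have hlam := hsk.1.compat.1 hG e'
        have hswapu : u (α (nadj (θ hG e'))) = u (α f) :=
          congrArg (fun x : ↥(G.neighborSet pb) => u (α (nadj x))) hee
        have hswapw : w (α (nadj (θ hG e'))) = w (α f) :=
          congrArg (fun x : ↥(G.neighborSet pb) => w (α (nadj x))) hee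
        have happ := congrArg u hc2
        have happw := congrArg w hc2
        simp only [map_sub, map_smul, smul_eq_mul] at happ happw
        rw [hswapu, hu0, mul_zero] at happ
        rw [hswapw, hw0, mul_zero] at happw
        have hlamne : lam hG e' ≠ 0 := ne_of_gt hlam
        have hval : u (α f) = u (α (nadj e')) / lam hG e' := by
          rw [eq_div_iff hlamne]
          linarith
        constructor
        · rw [hval]
          exact div_nonneg (hp1 (nadj e')) (le_of_lt hlam)
        · intro hwf
          rw [hwf, mul_zero, sub_zero] at happw
          have hue' : u (α (nadj e')) = 0 := hp2 (nadj e') happw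
          rw [hval, hue', zero_div]
    exact ih (fun b f => (key f).1) (fun b f => (key f).2)

private lemma reach_in_slice [Fintype V] (hsk : IsOneSkeleton G θ lam α)
    (hd : Valency G d) (hind : kIndep G α d) (htoral : Toral G α)
    {p q : V} (u : (Fin d → ℝ) →ₗ[ℝ] ℝ)
    (hp : ∀ ⦃b : V⦄ (h : G.Adj p b), 0 ≤ u (α h))
    (hq : ∀ ⦃b : V⦄ (h : G.Adj q b), 0 ≤ u (α h)) :
    (sliceGraph G α (LinearMap.ker u)).Reachable p q := by
  obtain ⟨η, hηpos, hηgen⟩ := exists_generic_pos hd hind q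
  obtain ⟨N, hN0, hdom⟩ := exists_dom (α := α) u η
  set ξ : (Fin d → ℝ) →ₗ[ℝ] ℝ := N • u + η with hξ
  have hξ0 : ∀ ⦃a b : V⦄ (h : G.Adj a b), u (α h) = 0 → ξ (α h) = η (α h) := by
    intro a b h h0
    simp [hξ, h0]
  have hgen : ∀ ⦃a b : V⦄ (h : G.Adj a b), ξ (α h) ≠ 0 := by
    intro a b h
    rcases lt_trichotomy (u (α h)) 0 with hlt | heq | hgt
    · exact ne_of_lt (dom_neg hdom h hlt)
    · rw [hξ0 h heq]
      exact hηgen h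
    · exact ne_of_gt (dom_pos hdom h hgt)
  have hqsrc : ∀ ⦃b : V⦄ (h : G.Adj q b), 0 < ξ (α h) := by
    intro b h
    rcases eq_or_lt_of_le (hq h) with h0 | hpos
    · rw [hξ0 h h0.symm]
      exact hηpos ⟨b, h⟩
    · exact dom_pos hdom h hpos
  obtain ⟨r, ⟨hrv, hrsrc⟩, -⟩ := htoral (LinearMap.ker u) p ξ (by
    intro a b h
    obtain ⟨hG, hk, -⟩ := h.1
    have h0 : u (α hG) = 0 := hk
    show ξ (α hG) ≠ 0
    rw [hξ0 hG h0]
    exact hηgen hG)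
  have hreach : (sliceGraph G α (LinearMap.ker u)).Reachable p r := hrv
  have hrX : ∀ ⦃b : V⦄ (h : G.Adj r b), 0 ≤ u (α h) := by
    obtain ⟨wk⟩ := hreach
    exact (walk_transport hsk u u wk hp (fun b h h0 => h0)).1
  have hrsrcG : ∀ ⦃b : V⦄ (h : G.Adj r b), 0 < ξ (α h) := by
    intro b h
    by_cases h0 : u (α h) = 0
    · have hsl : (sliceGraph G α (LinearMap.ker u)).Adj r b := by
        refine ⟨h, LinearMap.mem_ker.mpr h0, ?_⟩
        rw [hsk.2.1 h]
        simp [LinearMap.mem_ker, h0]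
      have hKadj : (sliceComponent G α (LinearMap.ker u) p).Adj r b :=
        ⟨hsl, hreach, hreach.trans hsl.reachable⟩
      exact hrsrc hKadj
    · have hpos : 0 < u (α h) := (hrX h).lt_of_ne (Ne.symm h0)
      exact dom_pos hdom h hpos
  have hqr : q = r := source_unique hsk htoral ξ hgen hqsrc hrsrcG
  rw [hqr]
  exact hreach

private lemma cone_half [Fintype V] (hsk : IsOneSkeleton G θ lam α)
    (hd : Valency G d) (hind : kIndep G α d) (htoral : Toral G α) (p q : V) :
    ∃ S : Set ↥(G.neighborSet p),
      XCone G α p ∩ XCone G α q =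
        {u ∈ XCone G α p | ∀ e ∈ S, u (α (nadj e)) = 0} := by
  classical
  haveI : Fintype ↥(G.neighborSet p) := (Set.toFinite _).fintype
  have hC0 : (0 : (Fin d → ℝ) →ₗ[ℝ] ℝ) ∈ XCone G α p ∩ XCone G α q := by
    constructor <;> · intro b h; simp
  set g : ↥(G.neighborSet p) → ((Fin d → ℝ) →ₗ[ℝ] ℝ) := fun e =>
    if h : ∃ w ∈ XCone G α p ∩ XCone G α q, 0 < w (α (nadj e)) then h.choose else 0
    with hgdef
  have hgC : ∀ e, g e ∈ XCone G α p ∩ XCone G α q := by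
    intro e
    by_cases h : ∃ w ∈ XCone G α p ∩ XCone G α q, 0 < w (α (nadj e))
    · have hge : g e = h.choose := by
        simp only [hgdef]
        exact dif_pos h
      rw [hge]
      exact h.choose_spec.1
    · have hge : g e = 0 := by
        simp only [hgdef]
        exact dif_neg h
      rw [hge]
      exact hC0
  set u' : (Fin d → ℝ) →ₗ[ℝ] ℝ := ∑ e : ↥(G.neighborSet p), g e with hu'def
  have hu'C : u' ∈ XCone G α p ∩ XCone G α q := by
    constructor
    · intro b h
      rw [hu'def, LinearMap.sum_apply]
      exact Finset.sum_nonneg fun e _ => (hgC e).1 h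
    · intro b h
      rw [hu'def, LinearMap.sum_apply]
      exact Finset.sum_nonneg fun e _ => (hgC e).2 h
  have hzero : ∀ e : ↥(G.neighborSet p), u' (α (nadj e)) = 0 →
      ∀ w ∈ XCone G α p ∩ XCone G α q, w (α (nadj e)) = 0 := by
    intro e h0 w hw
    by_contra hne
    have hpos : 0 < w (α (nadj e)) := (hw.1 (nadj e)).lt_of_ne (Ne.symm hne)
    have hex : ∃ w' ∈ XCone G α p ∩ XCone G α q, 0 < w' (α (nadj e)) := ⟨w, hw, hpos⟩
    have hge : 0 < g e (α (nadj e)) := by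
      have hgee : g e = hex.choose := by
        simp only [hgdef]
        exact dif_pos hex
      rw [hgee]
      exact hex.choose_spec.2
    have hgt : 0 < u' (α (nadj e)) := by
      rw [hu'def, LinearMap.sum_apply]
      exact Finset.sum_pos' (fun e' _ => (hgC e').1 (nadj e)) ⟨e, Finset.mem_univ e, hge⟩
    exact absurd h0 (ne_of_gt hgt)
  refine ⟨{e | u' (α (nadj e)) = 0}, Set.Subset.antisymm ?_ ?_⟩
  · rintro w ⟨hw1, hw2⟩
    exact ⟨hw1, fun e he => hzero e he w ⟨hw1, hw2⟩⟩
  · rintro w ⟨hw1, hwS⟩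
    refine ⟨hw1, ?_⟩
    have hreach := reach_in_slice hsk hd hind htoral u' hu'C.1 hu'C.2
    obtain ⟨wk⟩ := hreach
    exact (walk_transport hsk w u' wk hw1
      (fun b h h0 => hwS (⟨b, h⟩ : ↥(G.neighborSet p)) h0)).1

end FaceProofAux

/-- For a toral `d`-valent `d`-independent 1-skeleton in `ℝ^d`, each
intersection `X_p ∩ X_q` is a face of `X_p` (and symmetrically of `X_q`). -/
theorem toral_skeleton_cone_intersections_are_faces
    {V : Type u} [Fintype V] {d : ℕ}
    (G : SimpleGraph V) (θ : GraphConn G) (lam : CompatSys G)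
    (α : AxialFn G (Fin d → ℝ))
    (hsk : IsOneSkeleton G θ lam α) (hd : Valency G d) (hind : kIndep G α d)
    (htoral : Toral G α) :
    ∀ p q : V,
      (∃ S : Set ↥(G.neighborSet p),
        XCone G α p ∩ XCone G α q =
          {u ∈ XCone G α p | ∀ e ∈ S, u (α (nadj e)) = 0}) ∧
      (∃ S' : Set ↥(G.neighborSet q),
        XCone G α p ∩ XCone G α q =
          {u ∈ XCone G α q | ∀ e ∈ S', u (α (nadj e)) = 0}) := by
  intro p q
  refine ⟨cone_half hsk hd hind htoral p q, ?_⟩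
  obtain ⟨S, hS⟩ := cone_half hsk hd hind htoral q p
  refine ⟨S, ?_⟩
  rw [Set.inter_comm]
  exact hS
end
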